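/- Let X be a 2n×2n real matrix with Δ(X) = ‖XᵀJX − J‖₂ < 1. Then X is nonsingular and κ₂(X) = ‖X⁻¹‖₂·‖X‖₂ ≤ ‖X‖₂² / (1 − Δ(X)). -/

import Mathlib

open Matrix
open scoped Matrix.Norms.L2Operator

/-- The standard symplectic matrix `J = [[0, I], [-I, 0]]`. -/
noncomputable def symplJ (n : ℕ) : Matrix (Fin n ⊕ Fin n) (Fin n ⊕ Fin n) ℝ :=
  Matrix.fromBlocks 0 1 (-1) 0

lemma symplJ_transpose_mul (n : ℕ) : (symplJ n)ᵀ * symplJ n = 1 := by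
  simp [symplJ, Matrix.fromBlocks_transpose, Matrix.fromBlocks_multiply,
    ← Matrix.fromBlocks_one]

lemma norm_one_le (n : ℕ) :
    ‖(1 : Matrix (Fin n ⊕ Fin n) (Fin n ⊕ Fin n) ℝ)‖ ≤ 1 := by
  rw [Matrix.cstar_norm_def, _root_.map_one]
  exact ContinuousLinearMap.norm_id_le

lemma norm_symplJ_le (n : ℕ) : ‖symplJ n‖ ≤ 1 := by
  have h := Matrix.l2_opNorm_conjTranspose_mul_self (symplJ n)
  have hct : (symplJ n)ᴴ = (symplJ n)ᵀ := Matrix.conjTranspose_eq_transpose_of_trivial _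
  rw [hct, symplJ_transpose_mul] at h
  nlinarith [norm_one_le n, norm_nonneg (symplJ n)]

/-- If `Δ(X) = ‖Xᵀ J X − J‖₂ < 1`, then `X` is nonsingular and
`κ₂(X) = ‖X⁻¹‖₂ ‖X‖₂ ≤ ‖X‖₂² / (1 − Δ(X))`. -/
theorem nonsingular_and_condition_bound_of_loss_lt_one (n : ℕ)
    (X : Matrix (Fin n ⊕ Fin n) (Fin n ⊕ Fin n) ℝ)
    (hΔ : ‖Xᵀ * symplJ n * X - symplJ n‖ < 1) :
    IsUnit X ∧
      ‖X⁻¹‖ * ‖X‖ ≤ ‖X‖ ^ 2 / (1 - ‖Xᵀ * symplJ n * X - symplJ n‖) := by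
  set J := symplJ n with hJ
  set E := Xᵀ * J * X - J with hE
  set a := ‖E‖ with ha
  have ha0 : (0:ℝ) ≤ a := norm_nonneg _
  have hJt : ‖Jᵀ‖ ≤ 1 := by
    rw [← Matrix.conjTranspose_eq_transpose_of_trivial, Matrix.l2_opNorm_conjTranspose]
    exact norm_symplJ_le n
  -- the perturbation t
  set t : Matrix (Fin n ⊕ Fin n) (Fin n ⊕ Fin n) ℝ := -(Jᵀ * E) with ht
  have htnorm : ‖t‖ ≤ a := by
    rw [ht, norm_neg]
    calc ‖Jᵀ * E‖ ≤ ‖Jᵀ‖ * ‖E‖ := Matrix.l2_opNorm_mul _ _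
      _ ≤ 1 * a := mul_le_mul hJt le_rfl (norm_nonneg _) zero_le_one
      _ = a := one_mul a
  have htlt : ‖t‖ < 1 := lt_of_le_of_lt htnorm hΔ
  set u := Units.oneSub t htlt with hu
  have key : Jᵀ * J = 1 := symplJ_transpose_mul n
  have huval : (u : Matrix (Fin n ⊕ Fin n) (Fin n ⊕ Fin n) ℝ) = Jᵀ * (Xᵀ * J * X) := by
    rw [hu, Units.val_oneSub, ht, sub_neg_eq_add, hE, mul_sub, key]
    abel
  set V : Matrix (Fin n ⊕ Fin n) (Fin n ⊕ Fin n) ℝ := ↑u⁻¹ with hV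
  have hinv : V * (u : Matrix (Fin n ⊕ Fin n) (Fin n ⊕ Fin n) ℝ) = 1 := u.inv_mul
  have hleft : (V * Jᵀ * Xᵀ * J) * X = 1 := by
    calc (V * Jᵀ * Xᵀ * J) * X
        = V * (Jᵀ * (Xᵀ * J * X)) := by simp only [mul_assoc]
      _ = V * (u : Matrix (Fin n ⊕ Fin n) (Fin n ⊕ Fin n) ℝ) := by rw [huval]
      _ = 1 := hinv
  have hXunit : IsUnit X := (Matrix.isUnit_iff_isUnit_det X).mpr (Matrix.isUnit_det_of_left_inverse hleft)
  refine ⟨hXunit, ?_⟩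
  have hXinv : X⁻¹ = V * Jᵀ * Xᵀ * J :=
    Matrix.inv_eq_left_inv hleft
  -- bound on ‖u⁻¹‖
  have hinvnorm : ‖V‖ ≤ (1 - a)⁻¹ := by
    have : V = ∑' k : ℕ, t ^ k := rfl
    rw [this]
    calc ‖∑' k : ℕ, t ^ k‖ ≤ ‖(1 : Matrix (Fin n ⊕ Fin n) (Fin n ⊕ Fin n) ℝ)‖ - 1 + (1 - ‖t‖)⁻¹ :=
          tsum_geometric_le_of_norm_lt_one t htlt
      _ ≤ (1 - ‖t‖)⁻¹ := by linarith [norm_one_le n]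
      _ ≤ (1 - a)⁻¹ := by
          exact inv_anti₀ (by linarith) (by linarith)
  have hXt : ‖Xᵀ‖ = ‖X‖ := by
    rw [← Matrix.conjTranspose_eq_transpose_of_trivial, Matrix.l2_opNorm_conjTranspose]
  have hJnorm : ‖J‖ ≤ 1 := norm_symplJ_le n
  have hbound : ‖X⁻¹‖ ≤ (1 - a)⁻¹ * ‖X‖ := by
    rw [hXinv]
    have h1a : (0:ℝ) < 1 - a := by linarith
    have s1 : ‖V‖ * ‖Jᵀ‖ ≤ (1 - a)⁻¹ := by
      calc ‖V‖ * ‖Jᵀ‖ ≤ (1 - a)⁻¹ * 1 :=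
            mul_le_mul hinvnorm hJt (norm_nonneg _) (by positivity)
        _ = (1 - a)⁻¹ := mul_one _
    have s2 : ‖V‖ * ‖Jᵀ‖ * ‖Xᵀ‖ ≤ (1 - a)⁻¹ * ‖X‖ := by
      rw [hXt]
      exact mul_le_mul_of_nonneg_right s1 (norm_nonneg _)
    have s3 : ‖V‖ * ‖Jᵀ‖ * ‖Xᵀ‖ * ‖J‖ ≤ (1 - a)⁻¹ * ‖X‖ := by
      calc ‖V‖ * ‖Jᵀ‖ * ‖Xᵀ‖ * ‖J‖ ≤ (1 - a)⁻¹ * ‖X‖ * 1 :=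
            mul_le_mul s2 hJnorm (norm_nonneg _) (by positivity)
        _ = (1 - a)⁻¹ * ‖X‖ := mul_one _
    calc ‖V * Jᵀ * Xᵀ * J‖ ≤ ‖V * Jᵀ * Xᵀ‖ * ‖J‖ := Matrix.l2_opNorm_mul _ _
      _ ≤ ‖V * Jᵀ‖ * ‖Xᵀ‖ * ‖J‖ :=
          mul_le_mul_of_nonneg_right (Matrix.l2_opNorm_mul _ _) (norm_nonneg _)
      _ ≤ ‖V‖ * ‖Jᵀ‖ * ‖Xᵀ‖ * ‖J‖ :=
          mul_le_mul_of_nonneg_right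
            (mul_le_mul_of_nonneg_right (Matrix.l2_opNorm_mul _ _) (norm_nonneg _))
            (norm_nonneg _)
      _ ≤ (1 - a)⁻¹ * ‖X‖ := s3
  have h1a : (0:ℝ) < 1 - a := by linarith
  rw [div_eq_mul_inv, pow_two]
  calc ‖X⁻¹‖ * ‖X‖ ≤ ((1 - a)⁻¹ * ‖X‖) * ‖X‖ := by gcongr
    _ = ‖X‖ * ‖X‖ * (1 - a)⁻¹ := by ring
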